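/- Let k be a field of characteristic 3, let η, a, b, c, d ∈ k with η ≠ 0, a ≠ 0, b ≠ 0 and c ≠ d, and set Δ = η·t³(t−a)³(t−b)³(t−c)²(t−d) ∈ k[t]. Then the coefficient of t¹¹ in Δ equals η(c−d) and the coefficient of t⁵ in Δ equals η·a³b³(c−d); both are nonzero. Consequently, Δ is not equal to any polynomial of the form −α³t¹² + α²β²t¹⁰ + t⁶·P₃ + β²t⁴·P₁ − σ³t³ with α, β, σ ∈ k, deg P₃ ≤ 3, deg P₁ ≤ 1 (which has vanishing t¹¹-coefficient), nor to any polynomial of the form t⁶·P₆ + σ·t³ with σ ∈ k, deg P₆ ≤ 6 (which has vanishing t⁵-coefficient). (This shows the configuration X I₃ I₃ I₂ I₁, with X any additive fibre over t = 0, is impossible on a rational elliptic surface in characteristic 3, as are its specializations in which the I₂ and I₁ fibres remain distinct and neither I₃ fibre collides with X.) -/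
import Mathlib


open Polynomial

theorem stmt8 {k : Type*} [Field k] [CharP k 3]
    (η a b c d : k) (hη : η ≠ 0) (ha : a ≠ 0) (hb : b ≠ 0) (hcd : c ≠ d)
    (Δ : k[X])
    (hΔ : Δ = C η * (X ^ 3 * (X - C a) ^ 3 * (X - C b) ^ 3 * (X - C c) ^ 2 * (X - C d))) :
    Δ.coeff 11 = η * (c - d) ∧ Δ.coeff 11 ≠ 0 ∧
    Δ.coeff 5 = η * (a ^ 3 * b ^ 3 * (c - d)) ∧ Δ.coeff 5 ≠ 0 ∧
    (∀ (α β σ : k) (P₃ P₁ : k[X]), P₃.degree ≤ 3 → P₁.degree ≤ 1 →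
      Δ ≠ -C α ^ 3 * X ^ 12 + C α ^ 2 * C β ^ 2 * X ^ 10 + X ^ 6 * P₃
            + C β ^ 2 * X ^ 4 * P₁ - C σ ^ 3 * X ^ 3) ∧
    (∀ (σ : k) (P₆ : k[X]), P₆.degree ≤ 6 → Δ ≠ X ^ 6 * P₆ + C σ * X ^ 3) := by
  have h3 : (3 : k) = 0 := CharP.cast_eq_zero k 3
  haveI : Fact (Nat.Prime 3) := ⟨by norm_num⟩
  have hE : Δ = C η * (X ^ 12 - C (2*c+d) * X ^ 11 + C (c^2+2*c*d) * X ^ 10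
      - C (c^2*d + (a^3+b^3)) * X ^ 9 + C ((a^3+b^3)*(2*c+d)) * X ^ 8
      - C ((a^3+b^3)*(c^2+2*c*d)) * X ^ 7 + C ((a^3+b^3)*c^2*d + a^3*b^3) * X ^ 6
      - C (a^3*b^3*(2*c+d)) * X ^ 5 + C (a^3*b^3*(c^2+2*c*d)) * X ^ 4
      - C (a^3*b^3*c^2*d) * X ^ 3) := by
    have hA : (X - C a) ^ 3 = X ^ 3 - C (a ^ 3) := by
      rw [sub_pow_char X (C a), ← C_pow]
    have hB : (X - C b) ^ 3 = X ^ 3 - C (b ^ 3) := by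
      rw [sub_pow_char X (C b), ← C_pow]
    rw [hΔ, hA, hB]
    simp only [map_add, map_sub, map_mul, map_pow, map_ofNat]
    ring
  have h11 : Δ.coeff 11 = η * (c - d) := by
    rw [hE]
    simp only [coeff_C_mul, coeff_add, coeff_sub, coeff_C_mul, coeff_X_pow]
    simp only [Nat.reduceEqDiff, if_true, if_false, reduceIte]
    linear_combination (-(c * η)) * h3
  have h5 : Δ.coeff 5 = η * (a ^ 3 * b ^ 3 * (c - d)) := by
    rw [hE]
    simp only [coeff_C_mul, coeff_add, coeff_sub, coeff_C_mul, coeff_X_pow]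
    simp only [Nat.reduceEqDiff, if_true, if_false, reduceIte]
    linear_combination (-(a^3*b^3*c*η)) * h3
  have hcd' : c - d ≠ 0 := sub_ne_zero.mpr hcd
  have h11ne : Δ.coeff 11 ≠ 0 := by
    rw [h11]; exact mul_ne_zero hη hcd'
  have h5ne : Δ.coeff 5 ≠ 0 := by
    rw [h5]
    exact mul_ne_zero hη (mul_ne_zero (mul_ne_zero (pow_ne_zero _ ha) (pow_ne_zero _ hb)) hcd')
  refine ⟨h11, h11ne, h5, h5ne, ?_, ?_⟩
  · intro α β σ P₃ P₁ hP₃ hP₁ heq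
    have e1' : P₃.coeff 5 = 0 :=
      coeff_eq_zero_of_degree_lt (lt_of_le_of_lt hP₃ (by decide))
    have e1 : ((X : k[X]) ^ 6 * P₃).coeff 11 = 0 := by
      rw [coeff_X_pow_mul']
      simpa using e1'
    have e2' : P₁.coeff 7 = 0 :=
      coeff_eq_zero_of_degree_lt (lt_of_le_of_lt hP₁ (by decide))
    have e2 : ((X : k[X]) ^ 4 * P₁).coeff 11 = 0 := by
      rw [coeff_X_pow_mul']
      simpa using e2'
    have h := congrArg (fun p => Polynomial.coeff p 11) heq
    simp only [← C_pow, mul_assoc, coeff_add, coeff_sub, neg_mul, coeff_neg,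
      coeff_C_mul, e1, e2, coeff_X_pow, Nat.reduceEqDiff, if_true, if_false, reduceIte,
      mul_zero, zero_add, add_zero, sub_zero, neg_zero, mul_one] at h
    exact h11ne h
  · intro σ P₆ hP₆ heq
    have e1 : ((X : k[X]) ^ 6 * P₆).coeff 5 = 0 := by
      rw [coeff_X_pow_mul']
      simp
    have h := congrArg (fun p => Polynomial.coeff p 5) heq
    simp only [coeff_add, e1, coeff_C_mul, coeff_X_pow, Nat.reduceEqDiff, if_true, if_false,
      reduceIte, mul_zero, zero_add, add_zero] at h
    exact h5ne h
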